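/- Let k ≥ 1 and φ(r) = ∑_{j=0}^{k} r^{2j+1}/(2j+1)!. Then the function r ↦ (φ'(r))² − φ(r)φ''(r) is strictly increasing on (0,∞), and (φ'(r))² − φ(r)φ''(r) > 1 for all r > 0. -/

import Mathlib

noncomputable def phi (k : ℕ) (r : ℝ) : ℝ :=
  ∑ j ∈ Finset.range (k + 1), r ^ (2 * j + 1) / (Nat.factorial (2 * j + 1) : ℝ)

noncomputable def Paux (k : ℕ) (r : ℝ) : ℝ :=
  ∑ j ∈ Finset.range (k + 1), r ^ (2 * j) / (Nat.factorial (2 * j) : ℝ)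

noncomputable def Qaux (k : ℕ) (r : ℝ) : ℝ :=
  ∑ j ∈ Finset.range k, r ^ (2 * j + 1) / (Nat.factorial (2 * j + 1) : ℝ)

noncomputable def Raux (k : ℕ) (r : ℝ) : ℝ :=
  ∑ j ∈ Finset.range k, r ^ (2 * j) / (Nat.factorial (2 * j) : ℝ)

lemma hasDerivAt_odd_sum (n : ℕ) (r : ℝ) :
    HasDerivAt (fun r : ℝ => ∑ j ∈ Finset.range n, r ^ (2 * j + 1) / (Nat.factorial (2 * j + 1) : ℝ))
      (∑ j ∈ Finset.range n, r ^ (2 * j) / (Nat.factorial (2 * j) : ℝ)) r := by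
  refine HasDerivAt.fun_sum ?_
  intro j _
  have h := (hasDerivAt_pow (2 * j + 1) r).div_const (Nat.factorial (2 * j + 1) : ℝ)
  refine h.congr_deriv ?_
  have hfac : (Nat.factorial (2 * j + 1) : ℝ) = (2 * j + 1) * Nat.factorial (2 * j) := by
    rw [Nat.factorial_succ]; push_cast; ring
  have hf : (Nat.factorial (2 * j) : ℝ) ≠ 0 := Nat.cast_ne_zero.mpr (Nat.factorial_ne_zero _)
  rw [hfac]
  simp only [Nat.add_sub_cancel]
  field_simp
  push_cast
  ring

lemma hasDerivAt_phi (k : ℕ) (r : ℝ) : HasDerivAt (phi k) (Paux k r) r := by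
  exact hasDerivAt_odd_sum (k + 1) r

lemma hasDerivAt_Qaux (k : ℕ) (r : ℝ) : HasDerivAt (Qaux k) (Raux k r) r := by
  exact hasDerivAt_odd_sum k r

lemma hasDerivAt_Paux (k : ℕ) (r : ℝ) : HasDerivAt (Paux k) (Qaux k r) r := by
  have H : HasDerivAt (Paux k)
      (∑ j ∈ Finset.range (k + 1),
        (2 * j : ℝ) * r ^ (2 * j - 1) / (Nat.factorial (2 * j) : ℝ)) r := by
    refine HasDerivAt.fun_sum ?_
    intro j _
    have h := (hasDerivAt_pow (2 * j) r).div_const (Nat.factorial (2 * j) : ℝ)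
    simpa using h
  convert H using 1
  rw [Finset.sum_range_succ' (fun j => (2 * j : ℝ) * r ^ (2 * j - 1) / (Nat.factorial (2 * j) : ℝ)) k]
  simp only [Nat.cast_zero, mul_zero, zero_mul, zero_div, add_zero]
  unfold Qaux
  apply Finset.sum_congr rfl
  intro i _
  have h1 : 2 * (i + 1) = 2 * i + 1 + 1 := by ring
  rw [h1]
  simp only [Nat.add_sub_cancel]
  have hfs : (Nat.factorial (2 * i + 1 + 1) : ℝ)
      = (2 * i + 1 + 1 : ℕ) * Nat.factorial (2 * i + 1) := by
    rw [Nat.factorial_succ]; push_cast; ring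
  rw [hfs]
  have hf : (Nat.factorial (2 * i + 1) : ℝ) ≠ 0 := Nat.cast_ne_zero.mpr (Nat.factorial_ne_zero _)
  have hne : ((2 * i + 1 + 1 : ℕ) : ℝ) ≠ 0 := by positivity
  push_cast
  field_simp
  ring

lemma Qaux_eq (k : ℕ) (r : ℝ) :
    Qaux k r = phi k r - r ^ (2 * k + 1) / (Nat.factorial (2 * k + 1) : ℝ) := by
  unfold phi Qaux
  rw [Finset.sum_range_succ]
  ring

lemma Raux_eq (k : ℕ) (r : ℝ) :
    Raux k r = Paux k r - r ^ (2 * k) / (Nat.factorial (2 * k) : ℝ) := by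
  unfold Paux Raux
  rw [Finset.sum_range_succ]
  ring

lemma key_ineq (k : ℕ) (hk : 1 ≤ k) {r : ℝ} (hr : 0 < r) :
    r * Paux k r < (2 * k + 1 : ℝ) * phi k r := by
  have hL : r * Paux k r = ∑ j ∈ Finset.range (k + 1),
      r ^ (2 * j + 1) / (Nat.factorial (2 * j) : ℝ) := by
    unfold Paux
    rw [Finset.mul_sum]
    refine Finset.sum_congr rfl ?_
    intro j _
    rw [pow_succ]
    ring
  have hR : (2 * k + 1 : ℝ) * phi k r = ∑ j ∈ Finset.range (k + 1),
      (2 * k + 1 : ℝ) * (r ^ (2 * j + 1) / (Nat.factorial (2 * j + 1) : ℝ)) := by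
    unfold phi
    rw [Finset.mul_sum]
  rw [hL, hR]
  refine Finset.sum_lt_sum ?_ ⟨0, Finset.mem_range.mpr (by omega), ?_⟩
  · intro j hj
    have hj' : j ≤ k := by
      have := Finset.mem_range.mp hj; omega
    have hfac : (Nat.factorial (2 * j + 1) : ℝ) = (2 * j + 1) * Nat.factorial (2 * j) := by
      rw [Nat.factorial_succ]; push_cast; ring
    have hf : (0 : ℝ) < (Nat.factorial (2 * j) : ℝ) := by positivity
    have hp : (0 : ℝ) < r ^ (2 * j + 1) := pow_pos hr _
    have heq : r ^ (2 * j + 1) / (Nat.factorial (2 * j) : ℝ)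
        = (2 * j + 1 : ℝ) * (r ^ (2 * j + 1) / (Nat.factorial (2 * j + 1) : ℝ)) := by
      rw [hfac]; field_simp
    rw [heq]
    have h1 : (2 * j + 1 : ℝ) ≤ (2 * k + 1 : ℝ) := by
      have : (j : ℝ) ≤ (k : ℝ) := by exact_mod_cast hj'
      linarith
    have h2 : 0 ≤ r ^ (2 * j + 1) / (Nat.factorial (2 * j + 1) : ℝ) := by positivity
    exact mul_le_mul_of_nonneg_right h1 h2
  · have hk' : (1 : ℝ) ≤ (k : ℝ) := by exact_mod_cast hk
    simp only [Nat.mul_zero, Nat.zero_add, pow_one, Nat.factorial_one, Nat.factorial_zero,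
      Nat.cast_one, div_one]
    nlinarith

theorem stmt_2 (k : ℕ) (hk : 1 ≤ k) :
    StrictMonoOn (fun r : ℝ => (deriv (phi k) r) ^ 2 - phi k r * deriv (deriv (phi k)) r)
        (Set.Ioi (0 : ℝ))
      ∧ ∀ r : ℝ, 0 < r →
          1 < (deriv (phi k) r) ^ 2 - phi k r * deriv (deriv (phi k)) r := by
  have hd1 : deriv (phi k) = Paux k := funext fun r => (hasDerivAt_phi k r).deriv
  have hd2 : deriv (deriv (phi k)) = fun r => Qaux k r := by
    rw [hd1]; exact funext fun r => (hasDerivAt_Paux k r).deriv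
  have hd3 : deriv (Paux k) = fun r => Qaux k r :=
    funext fun r => (hasDerivAt_Paux k r).deriv
  simp only [hd2, hd1, hd3]
  set W : ℝ → ℝ := fun r => (Paux k r) ^ 2 - phi k r * Qaux k r with hW
  have hWderiv : ∀ r : ℝ, HasDerivAt W (Paux k r * Qaux k r - phi k r * Raux k r) r := by
    intro r
    have h1 := ((hasDerivAt_Paux k r).pow 2).sub
      ((hasDerivAt_phi k r).mul (hasDerivAt_Qaux k r))
    convert h1 using 1
    · rfl
    · rfl
    · rfl
    · ring
  have hWpos : ∀ r ∈ interior (Set.Ici (0 : ℝ)), 0 < deriv W r := by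
    intro r hr
    rw [interior_Ici] at hr
    have hr' : (0:ℝ) < r := hr
    rw [(hWderiv r).deriv]
    rw [Qaux_eq, Raux_eq]
    have hfac : (Nat.factorial (2 * k + 1) : ℝ) = (2 * k + 1) * Nat.factorial (2 * k) := by
      rw [Nat.factorial_succ]; push_cast; ring
    have hf : (0 : ℝ) < (Nat.factorial (2 * k) : ℝ) := by positivity
    have key := key_ineq k hk hr'
    have hp : (0 : ℝ) < r ^ (2 * k) := pow_pos hr' _
    have hexp : Paux k r * (phi k r - r ^ (2 * k + 1) / (Nat.factorial (2 * k + 1) : ℝ))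
        - phi k r * (Paux k r - r ^ (2 * k) / (Nat.factorial (2 * k) : ℝ))
        = r ^ (2 * k) / (Nat.factorial (2 * k + 1) : ℝ)
          * ((2 * k + 1 : ℝ) * phi k r - r * Paux k r) := by
      rw [hfac]
      field_simp
      ring
    rw [hexp]
    have h2 : 0 < r ^ (2 * k) / (Nat.factorial (2 * k + 1) : ℝ) := by positivity
    nlinarith
  have hcont : ContinuousOn W (Set.Ici (0 : ℝ)) := by
    apply Continuous.continuousOn
    have : Differentiable ℝ W := fun r => (hWderiv r).differentiableAt
    exact this.continuous
  have hmono : StrictMonoOn W (Set.Ici (0 : ℝ)) :=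
    strictMonoOn_of_deriv_pos (convex_Ici 0) hcont hWpos
  have hW0 : W 0 = 1 := by
    have hphi0 : phi k 0 = 0 := by
      unfold phi
      apply Finset.sum_eq_zero
      intro j _
      simp
    have hP0 : Paux k 0 = 1 := by
      unfold Paux
      rw [Finset.sum_eq_single 0]
      · simp
      · intro j _ hj
        have : 2 * j ≠ 0 := by omega
        simp [this]
      · intro h; simp at h
    simp [hW, hphi0, hP0]
  constructor
  · exact hmono.mono (Set.Ioi_subset_Ici_self)
  · intro r hr
    have := hmono (Set.self_mem_Ici) (Set.mem_Ici.mpr hr.le) hr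
    rw [hW0] at this
    exact this
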